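/- Let A be a commutative ring of characteristic 2 and a, b ∈ A. Set w = τ(a + b) − τ(a) − τ(b) ∈ W(A) (2-typical Witt vectors). Then w.coeff 0 = 0, w.coeff 1 = a·b, w.coeff 2 = a·b·(a² + a·b + b²), and w.coeff 3 = a·b·(a⁶ + a⁵·b + a³·b³ + a·b⁵ + b⁶). (This is the identity (a+b,0,0,0) − (a,0,0,0) − (b,0,0,0) = (0, ab, ab(a²+ab+b²), ab(a⁶+a⁵b+a³b³+ab⁵+b⁶)) in W₄(A).) -/
import Mathlib

open MvPolynomial Finset

namespace WittSubCharTwoAux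

noncomputable def Wq : WittVector 2 (MvPolynomial (Fin 2) ℚ) :=
  WittVector.teichmuller 2 (X 0 + X 1) - WittVector.teichmuller 2 (X 0) -
    WittVector.teichmuller 2 (X 1)

lemma ghost_Wq (n : ℕ) :
    WittVector.ghostComponent n Wq =
      (X 0 + X 1 : MvPolynomial (Fin 2) ℚ) ^ 2 ^ n - (X 0 : MvPolynomial (Fin 2) ℚ) ^ 2 ^ n -
        (X 1 : MvPolynomial (Fin 2) ℚ) ^ 2 ^ n := by
  simp [Wq, WittVector.ghostComponent_teichmuller]

lemma ghost_eq_sum (n : ℕ) (x : WittVector 2 (MvPolynomial (Fin 2) ℚ)) :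
    WittVector.ghostComponent n x =
      ∑ i ∈ range (n + 1), (2 : MvPolynomial (Fin 2) ℚ) ^ i * x.coeff i ^ 2 ^ (n - i) := by
  rw [WittVector.ghostComponent_apply, aeval_wittPolynomial]
  norm_num

lemma coeffq0 : Wq.coeff 0 = 0 := by
  have h := (ghost_eq_sum 0 Wq).symm.trans (ghost_Wq 0)
  simpa using h

lemma coeffq1 : Wq.coeff 1 = X 0 * X 1 := by
  have h := (ghost_eq_sum 1 Wq).symm.trans (ghost_Wq 1)
  rw [Finset.sum_range_succ, Finset.sum_range_succ, Finset.sum_range_zero, coeffq0] at h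
  have h2 : (2 : MvPolynomial (Fin 2) ℚ) ≠ 0 := two_ne_zero
  apply mul_left_cancel₀ h2
  linear_combination h

lemma coeffq2 : Wq.coeff 2 = X 0 * X 1 * ((X 0) ^ 2 + X 0 * X 1 + (X 1) ^ 2) := by
  have h := (ghost_eq_sum 2 Wq).symm.trans (ghost_Wq 2)
  rw [Finset.sum_range_succ, Finset.sum_range_succ, Finset.sum_range_succ,
    Finset.sum_range_zero, coeffq0, coeffq1] at h
  have h4 : (4 : MvPolynomial (Fin 2) ℚ) ≠ 0 := by
    norm_num
  apply mul_left_cancel₀ h4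
  linear_combination h

lemma coeffq3 : Wq.coeff 3 =
    (X 0) ^ 7 * X 1 + 3 * (X 0) ^ 6 * (X 1) ^ 2 + 6 * (X 0) ^ 5 * (X 1) ^ 3 +
      7 * (X 0) ^ 4 * (X 1) ^ 4 + 6 * (X 0) ^ 3 * (X 1) ^ 5 + 3 * (X 0) ^ 2 * (X 1) ^ 6 +
      X 0 * (X 1) ^ 7 := by
  have h := (ghost_eq_sum 3 Wq).symm.trans (ghost_Wq 3)
  rw [Finset.sum_range_succ, Finset.sum_range_succ, Finset.sum_range_succ,
    Finset.sum_range_succ, Finset.sum_range_zero, coeffq0, coeffq1, coeffq2] at h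
  have h8 : (8 : MvPolynomial (Fin 2) ℚ) ≠ 0 := by norm_num
  apply mul_left_cancel₀ h8
  linear_combination h

noncomputable def Wz : WittVector 2 (MvPolynomial (Fin 2) ℤ) :=
  WittVector.teichmuller 2 (X 0 + X 1) - WittVector.teichmuller 2 (X 0) -
    WittVector.teichmuller 2 (X 1)

lemma map_Wz :
    WittVector.map (MvPolynomial.map (Int.castRingHom ℚ)) Wz = Wq := by
  simp [Wz, Wq, WittVector.map_teichmuller]

lemma coeffz (n : ℕ) (P : MvPolynomial (Fin 2) ℤ)
    (hP : MvPolynomial.map (Int.castRingHom ℚ) P = Wq.coeff n) : Wz.coeff n = P := by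
  apply MvPolynomial.map_injective (Int.castRingHom ℚ) Int.cast_injective
  rw [hP, ← map_Wz, WittVector.map_coeff]

lemma coeffz0 : Wz.coeff 0 = 0 := coeffz 0 0 (by simp [coeffq0])

lemma coeffz1 : Wz.coeff 1 = X 0 * X 1 := coeffz 1 _ (by simp [coeffq1])

lemma coeffz2 : Wz.coeff 2 = X 0 * X 1 * ((X 0) ^ 2 + X 0 * X 1 + (X 1) ^ 2) :=
  coeffz 2 _ (by rw [coeffq2]; simp)

lemma coeffz3 : Wz.coeff 3 =
    (X 0) ^ 7 * X 1 + 3 * (X 0) ^ 6 * (X 1) ^ 2 + 6 * (X 0) ^ 5 * (X 1) ^ 3 +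
      7 * (X 0) ^ 4 * (X 1) ^ 4 + 6 * (X 0) ^ 3 * (X 1) ^ 5 + 3 * (X 0) ^ 2 * (X 1) ^ 6 +
      X 0 * (X 1) ^ 7 :=
  coeffz 3 _ (by rw [coeffq3]; simp)

end WittSubCharTwoAux

/-- In `W₄(A)` for `A` of characteristic 2:
`(a+b,0,0,0) − (a,0,0,0) − (b,0,0,0)
  = (0, ab, ab(a²+ab+b²), ab(a⁶+a⁵b+a³b³+ab⁵+b⁶))`. -/
theorem witt_teichmuller_sub_char_two (A : Type*) [CommRing A] [CharP A 2] (a b : A)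
    (w : WittVector 2 A)
    (hw : w = WittVector.teichmuller 2 (a + b) - WittVector.teichmuller 2 a -
      WittVector.teichmuller 2 b) :
    w.coeff 0 = 0 ∧ w.coeff 1 = a * b ∧
      w.coeff 2 = a * b * (a ^ 2 + a * b + b ^ 2) ∧
      w.coeff 3 = a * b * (a ^ 6 + a ^ 5 * b + a ^ 3 * b ^ 3 + a * b ^ 5 + b ^ 6) := by
  have h2 : (2 : A) = 0 := by exact_mod_cast CharP.cast_eq_zero A 2
  let φ : MvPolynomial (Fin 2) ℤ →+* A := (MvPolynomial.aeval ![a, b]).toRingHom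
  have hφ0 : φ (MvPolynomial.X 0) = a := by simp [φ]
  have hφ1 : φ (MvPolynomial.X 1) = b := by simp [φ]
  have hmap : w = WittVector.map φ WittSubCharTwoAux.Wz := by
    rw [hw, WittSubCharTwoAux.Wz]
    simp [WittVector.map_teichmuller, hφ0, hφ1]
  have key : ∀ n, w.coeff n = φ (WittSubCharTwoAux.Wz.coeff n) := by
    intro n; rw [hmap, WittVector.map_coeff]
  refine ⟨?_, ?_, ?_, ?_⟩
  · rw [key 0, WittSubCharTwoAux.coeffz0]; simp
  · rw [key 1, WittSubCharTwoAux.coeffz1]; simp [hφ0, hφ1]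
  · rw [key 2, WittSubCharTwoAux.coeffz2]; simp [hφ0, hφ1]
  · rw [key 3, WittSubCharTwoAux.coeffz3]
    simp only [map_add, map_mul, map_pow, map_ofNat, hφ0, hφ1]
    linear_combination (a ^ 6 * b ^ 2 + 3 * a ^ 5 * b ^ 3 + 3 * a ^ 4 * b ^ 4 +
      3 * a ^ 3 * b ^ 5 + a ^ 2 * b ^ 6) * h2
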